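/- Let N ∈ ℕ and let Q be an N × N matrix with entries in Q(Λ_{ℤ,univ}), viewed inside Λ_{ℚ,univ} = HahnSeries ℝ ℚ, such that det Q ≠ 0. Then for all sufficiently large primes p: every coefficient of every entry of Q is p-integral, so the entrywise coefficientwise mod-p reduction [Q]_p is a well-defined N × N matrix over Λ_{𝔽_p,univ} = HahnSeries ℝ (ZMod p), and det([Q]_p) ≠ 0, i.e., [Q]_p is invertible over the field Λ_{𝔽_p,univ}. -/

import Mathlib

noncomputable section

/-- The canonical coefficientwise embedding `Λ_{ℤ,univ} → Λ_{ℚ,univ}`. -/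
def iota (x : HahnSeries ℝ ℤ) : HahnSeries ℝ ℚ := x.map (Int.castRingHom ℚ)

/-- Reduction of a (`p`-integral) rational number modulo `p`, sending `q` to
`q.num * (q.den)⁻¹` in `ZMod p`. -/
def ratRed (p : ℕ) : ZeroHom ℚ (ZMod p) where
  toFun q := (q.num : ZMod p) * (q.den : ZMod p)⁻¹
  map_zero' := by simp

/-- Coefficientwise mod-`p` reduction `Λ_{ℚ,univ} → Λ_{𝔽_p,univ}` (meaningful on series
all of whose coefficients are `p`-integral). -/
def redQ (p : ℕ) (x : HahnSeries ℝ ℚ) : HahnSeries ℝ (ZMod p) := x.map (ratRed p)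

/-! ### Auxiliary material -/

lemma aux_mulden (q : ℚ) : q * (q.den : ℚ) = q.num :=
  (((div_eq_iff (by exact_mod_cast q.den_ne_zero)).mp (Rat.num_div_den q))).symm

lemma ratRed_key (p : ℕ) (hp : p.Prime) (q : ℚ) (m n : ℤ)
    (hn : ((n : ZMod p) ≠ 0)) (h : q * (n : ℚ) = (m : ℚ)) :
    ¬ p ∣ q.den ∧ (ratRed p q = (m : ZMod p) * (n : ZMod p)⁻¹) := by
  haveI : NeZero p := ⟨hp.pos.ne'⟩
  haveI : Fact p.Prime := ⟨hp⟩
  have hn0 : n ≠ 0 := by rintro rfl; simp at hn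
  have hq : q = Rat.divInt m n := by
    rw [Rat.divInt_eq_div, eq_div_iff (by exact_mod_cast hn0)]; exact h
  have hdvd : ((q.den : ℤ)) ∣ n := hq ▸ Rat.den_dvd m n
  have hdenp : ¬ p ∣ q.den := by
    intro hpd
    apply hn
    rw [ZMod.intCast_zmod_eq_zero_iff_dvd]
    exact dvd_trans (Int.natCast_dvd_natCast.mpr hpd) hdvd
  refine ⟨hdenp, ?_⟩
  have hden : (q.den : ZMod p) ≠ 0 := by
    rw [Ne, ZMod.natCast_eq_zero_iff]; exact hdenp
  have hcross : q.num * n = m * (q.den : ℤ) := by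
    have : (q.num : ℚ) * n = m * (q.den : ℚ) := by
      have hd := aux_mulden q
      calc (q.num : ℚ) * n = q * (q.den:ℚ) * n := by rw [hd]
        _ = (q * n) * (q.den:ℚ) := by ring
        _ = m * (q.den:ℚ) := by rw [h]
    exact_mod_cast this
  have hcross' : (q.num : ZMod p) * (n : ZMod p) = (m : ZMod p) * (q.den : ZMod p) := by
    exact_mod_cast congrArg (Int.cast : ℤ → ZMod p) hcross
  show (q.num : ZMod p) * (q.den : ZMod p)⁻¹ = _
  field_simp
  linear_combination hcross'

/-- The subring of `p`-integral rational numbers. -/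
def Rp (p : ℕ) (hp : p.Prime) : Subring ℚ where
  carrier := {q | ¬ p ∣ q.den}
  zero_mem' := by simp [Nat.dvd_one, hp.ne_one]
  one_mem' := by simp [Nat.dvd_one, hp.ne_one]
  add_mem' := by
    intro a b ha hb h
    rcases (hp.dvd_mul.mp (h.trans (Rat.add_den_dvd a b))) with h' | h'
    exacts [ha h', hb h']
  mul_mem' := by
    intro a b ha hb h
    rcases (hp.dvd_mul.mp (h.trans (Rat.mul_den_dvd a b))) with h' | h'
    exacts [ha h', hb h']
  neg_mem' := by intro a ha; simpa using ha

lemma den_ne (p : ℕ) (hp : p.Prime) [NeZero p] (a : Rp p hp) : ((a:ℚ).den : ZMod p) ≠ 0 := by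
  rw [Ne, ZMod.natCast_eq_zero_iff]; exact a.2

/-- Mod-`p` reduction as a ring hom on `p`-integral rationals. -/
def phi (p : ℕ) (hp : p.Prime) : Rp p hp →+* ZMod p where
  toFun q := ratRed p (q : ℚ)
  map_one' := by show ratRed p 1 = 1; simp [ratRed]
  map_zero' := by show ratRed p 0 = 0; simp [ratRed]
  map_mul' := by
    haveI : NeZero p := ⟨hp.pos.ne'⟩
    haveI : Fact p.Prime := ⟨hp⟩
    intro a b
    have hda := den_ne p hp a
    have hdb := den_ne p hp b
    have hn : (((a:ℚ).den * (b:ℚ).den : ℤ) : ZMod p) ≠ 0 := by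
      push_cast; exact mul_ne_zero hda hdb
    have h : ((a:ℚ)*(b:ℚ)) * (((a:ℚ).den * (b:ℚ).den : ℤ) : ℚ)
        = (((a:ℚ).num * (b:ℚ).num : ℤ) : ℚ) := by
      push_cast
      calc (a:ℚ)*(b:ℚ) * ((a:ℚ).den * (b:ℚ).den)
          = ((a:ℚ)*(a:ℚ).den) * ((b:ℚ)*(b:ℚ).den) := by ring
        _ = _ := by rw [aux_mulden, aux_mulden]
    obtain ⟨-, h2⟩ := ratRed_key p hp ((a:ℚ)*(b:ℚ)) _ _ hn h
    show ratRed p ((a:ℚ)*(b:ℚ)) = ratRed p (a:ℚ) * ratRed p (b:ℚ)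
    rw [h2]
    show _ = (((a:ℚ).num : ZMod p) * ((a:ℚ).den : ZMod p)⁻¹)
      * (((b:ℚ).num : ZMod p) * ((b:ℚ).den : ZMod p)⁻¹)
    push_cast
    field_simp
  map_add' := by
    haveI : NeZero p := ⟨hp.pos.ne'⟩
    haveI : Fact p.Prime := ⟨hp⟩
    intro a b
    have hda := den_ne p hp a
    have hdb := den_ne p hp b
    have hn : (((a:ℚ).den * (b:ℚ).den : ℤ) : ZMod p) ≠ 0 := by
      push_cast; exact mul_ne_zero hda hdb
    have h : ((a:ℚ)+(b:ℚ)) * (((a:ℚ).den * (b:ℚ).den : ℤ) : ℚ)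
        = (((a:ℚ).num * (b:ℚ).den + (b:ℚ).num * (a:ℚ).den : ℤ) : ℚ) := by
      push_cast
      have h1 := aux_mulden (a:ℚ); have h2 := aux_mulden (b:ℚ)
      linear_combination ((b:ℚ).den : ℚ) * h1 + ((a:ℚ).den : ℚ) * h2
    obtain ⟨-, h2⟩ := ratRed_key p hp ((a:ℚ)+(b:ℚ)) _ _ hn h
    show ratRed p ((a:ℚ)+(b:ℚ)) = ratRed p (a:ℚ) + ratRed p (b:ℚ)
    rw [h2]
    show _ = (((a:ℚ).num : ZMod p) * ((a:ℚ).den : ZMod p)⁻¹)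
      + (((b:ℚ).num : ZMod p) * ((b:ℚ).den : ZMod p)⁻¹)
    push_cast
    field_simp

/-- Hahn series functoriality, as a ring hom. -/
def hmap {R S : Type*} [CommRing R] [CommRing S] (f : R →+* S) :
    HahnSeries ℝ R →+* HahnSeries ℝ S where
  toFun x := x.map f
  map_one' := by
    ext r
    simp only [HahnSeries.map_coeff, HahnSeries.coeff_one]
    split <;> simp
  map_mul' x y := HahnSeries.map_mul (f : R →ₙ+* S)
  map_zero' := by ext r; simp
  map_add' x y := HahnSeries.map_add (f : R →+ S)

lemma hmap_coeff {R S : Type*} [CommRing R] [CommRing S] (f : R →+* S)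
    (x : HahnSeries ℝ R) (r : ℝ) : (hmap f x).coeff r = f (x.coeff r) := rfl

lemma min_congr {Γ : Type*} [LinearOrder Γ] {s t : Set Γ} (h : s = t) (hs : s.IsWF)
    (hns : s.Nonempty) (ht : t.IsWF) (hnt : t.Nonempty) : hs.min hns = ht.min hnt := by
  subst h; rfl

lemma map_support {Γ R S : Type*} [PartialOrder Γ] [Zero R] [Zero S]
    {F : Type*} [FunLike F R S] [ZeroHomClass F R S] (f : F) (hf : ∀ a, f a = 0 → a = 0)
    (x : HahnSeries Γ R) : (x.map f).support = x.support := by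
  ext r
  simp only [HahnSeries.support, Function.mem_support, HahnSeries.map_coeff]
  exact ⟨fun h h0 => h (by rw [h0]; exact map_zero f), fun h h0 => h (hf _ h0)⟩

lemma hs_map_ne_zero {Γ R S : Type*} [PartialOrder Γ] [Zero R] [Zero S]
    {F : Type*} [FunLike F R S] [ZeroHomClass F R S] (f : F) (hf : ∀ a, f a = 0 → a = 0)
    {x : HahnSeries Γ R} (hx : x ≠ 0) : x.map f ≠ 0 := by
  intro h
  apply hx
  rw [← HahnSeries.support_eq_empty_iff, ← map_support f hf x,
    HahnSeries.support_eq_empty_iff]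
  exact h

lemma map_leadingCoeff {Γ R S : Type*} [LinearOrder Γ] [Zero R] [Zero S]
    {F : Type*} [FunLike F R S] [ZeroHomClass F R S] (f : F) (hf : ∀ a, f a = 0 → a = 0)
    (x : HahnSeries Γ R) : (x.map f).leadingCoeff = f x.leadingCoeff := by
  by_cases hx : x = 0
  · subst hx
    have h0 : (0 : HahnSeries Γ R).map f = 0 := by ext r; simp
    rw [h0, HahnSeries.leadingCoeff_zero, HahnSeries.leadingCoeff_zero, map_zero f]
  · have hx' : x.map f ≠ 0 := hs_map_ne_zero f hf hx
    rw [HahnSeries.leadingCoeff_of_ne_zero hx', HahnSeries.leadingCoeff_of_ne_zero hx,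
      HahnSeries.map_coeff,
      (WithTop.untop_eq_iff _).mpr (HahnSeries.orderTop_of_ne_zero hx'),
      (WithTop.untop_eq_iff _).mpr (HahnSeries.orderTop_of_ne_zero hx)]
    have hm := min_congr (map_support f hf x) ((x.map f).isWF_support)
      (HahnSeries.support_nonempty_iff.2 hx') x.isWF_support
      (HahnSeries.support_nonempty_iff.2 hx)
    rw [hm]

/-- `ℤ` lands in the `p`-integral rationals. -/
def intRp (p : ℕ) (hp : p.Prime) : ℤ →+* Rp p hp :=
  (Int.castRingHom ℚ).codRestrict _ (fun n => by
    show ¬ p ∣ ((n : ℚ)).den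
    simp [Rat.den_intCast, Nat.dvd_one, hp.ne_one])

lemma intRp_inj (p : ℕ) (hp : p.Prime) : ∀ a : ℤ, intRp p hp a = 0 → a = 0 := by
  intro a ha
  have h2 : (Int.castRingHom ℚ) a = 0 := congrArg Subtype.val ha
  rwa [map_eq_zero_iff _ Int.cast_injective] at h2

theorem reduction_of_invertible_matrix_is_invertible
    (n : ℕ) (Q : Matrix (Fin n) (Fin n) (HahnSeries ℝ ℚ))
    (hfrac : ∀ i j, ∃ A B : HahnSeries ℝ ℤ, B ≠ 0 ∧ Q i j * iota B = iota A)
    (hdet : Q.det ≠ 0) :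
    ∃ N : ℕ, ∀ p : ℕ, p.Prime → N < p →
      (∀ i j, ∀ r : ℝ, ¬ (p : ℕ) ∣ ((Q i j).coeff r).den) ∧
      Matrix.det (fun i j => redQ p (Q i j)) ≠ 0 := by
  classical
  choose A B hB hQB using hfrac
  obtain ⟨r₀, hr₀⟩ : ∃ r, (Q.det).coeff r ≠ 0 := by
    by_contra h
    push_neg at h
    exact hdet (HahnSeries.ext (funext h))
  set q₀ := Q.det.coeff r₀ with hq₀
  refine ⟨q₀.num.natAbs + ∑ i, ∑ j, (B i j).leadingCoeff.natAbs, ?_⟩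
  intro p hp hlt
  haveI : NeZero p := ⟨hp.pos.ne'⟩
  haveI : Fact p.Prime := ⟨hp⟩
  -- leading coefficients of the B's are not divisible by p
  have hc : ∀ i j, ¬ (p:ℤ) ∣ (B i j).leadingCoeff := by
    intro i j hdvd
    have hcne : (B i j).leadingCoeff ≠ 0 := HahnSeries.leadingCoeff_ne_zero.2 (hB i j)
    have h1 : p ∣ (B i j).leadingCoeff.natAbs := by
      simpa using Int.natAbs_dvd_natAbs.mpr hdvd
    have h2 : (B i j).leadingCoeff.natAbs ≤ q₀.num.natAbs
        + ∑ i', ∑ j', (B i' j').leadingCoeff.natAbs := by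
      have hle1 : (B i j).leadingCoeff.natAbs ≤ ∑ j', (B i j').leadingCoeff.natAbs :=
        Finset.single_le_sum (f := fun j' => (B i j').leadingCoeff.natAbs)
          (fun _ _ => Nat.zero_le _) (Finset.mem_univ j)
      have hle2 : (∑ j', (B i j').leadingCoeff.natAbs)
          ≤ ∑ i', ∑ j', (B i' j').leadingCoeff.natAbs :=
        Finset.single_le_sum (f := fun i' => ∑ j', (B i' j').leadingCoeff.natAbs)
          (fun _ _ => Nat.zero_le _) (Finset.mem_univ i)
      omega
    have := Nat.le_of_dvd (Int.natAbs_pos.2 hcne) h1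
    omega
  -- units
  have hunit : ∀ i j, IsUnit ((B i j).map (intRp p hp) : HahnSeries ℝ (Rp p hp)) := by
    intro i j
    apply HahnSeries.isUnit_iff.mpr
    rw [map_leadingCoeff _ (intRp_inj p hp)]
    set c := (B i j).leadingCoeff with hcdef
    have hcne : c ≠ 0 := HahnSeries.leadingCoeff_ne_zero.2 (hB i j)
    have hcq : ((c : ℚ)) ≠ 0 := by exact_mod_cast hcne
    have hvmem : (c : ℚ)⁻¹ ∈ Rp p hp := by
      show ¬ p ∣ ((c : ℚ)⁻¹).den
      intro hpd
      have hdd : (((c:ℚ)⁻¹).den : ℤ) ∣ c := by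
        have : ((Rat.divInt 1 c).den : ℤ) ∣ c := Rat.den_dvd 1 c
        have he : Rat.divInt 1 c = (c : ℚ)⁻¹ := by
          rw [Rat.divInt_eq_div]; push_cast; exact one_div _
        rwa [he] at this
      exact hc i j (dvd_trans (Int.natCast_dvd_natCast.mpr hpd) hdd)
    exact IsUnit.of_mul_eq_one (⟨(c:ℚ)⁻¹, hvmem⟩ : Rp p hp)
      (Subtype.ext (mul_inv_cancel₀ hcq))
  -- the lifted matrix
  set ι : HahnSeries ℝ (Rp p hp) →+* HahnSeries ℝ ℚ := hmap (Rp p hp).subtype with hι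
  set Q' : Fin n → Fin n → HahnSeries ℝ (Rp p hp) :=
    fun i j => ((A i j).map (intRp p hp)) * ↑((hunit i j).unit⁻¹) with hQ'def
  have hiotaB : ∀ i j, ι ((B i j).map (intRp p hp)) = iota (B i j) := by
    intro i j; ext r; rfl
  have hiotaA : ∀ i j, ι ((A i j).map (intRp p hp)) = iota (A i j) := by
    intro i j; ext r; rfl
  have hiotaBne : ∀ i j, iota (B i j) ≠ 0 := by
    intro i j
    exact hs_map_ne_zero (Int.castRingHom ℚ) (fun a ha => by rwa [map_eq_zero_iff _ Int.cast_injective] at ha) (hB i j)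
  have hQ' : ∀ i j, ι (Q' i j) = Q i j := by
    intro i j
    apply mul_right_cancel₀ (hiotaBne i j)
    have hQB' : Q' i j * ((B i j).map (intRp p hp)) = (A i j).map (intRp p hp) := by
      rw [hQ'def]
      dsimp only
      rw [mul_assoc, IsUnit.val_inv_mul, mul_one]
    calc ι (Q' i j) * iota (B i j)
        = ι (Q' i j) * ι ((B i j).map (intRp p hp)) := by rw [hiotaB i j]
      _ = ι (Q' i j * ((B i j).map (intRp p hp))) := (map_mul ι _ _).symm
      _ = ι ((A i j).map (intRp p hp)) := by rw [hQB']
      _ = iota (A i j) := hiotaA i j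
      _ = Q i j * iota (B i j) := (hQB i j).symm
  constructor
  · intro i j r
    rw [← hQ' i j]
    exact ((Q' i j).coeff r).2
  · -- determinant part
    set M' : Matrix (Fin n) (Fin n) (HahnSeries ℝ (Rp p hp)) := Matrix.of fun i j => Q' i j
      with hM'
    have hdetlift : ι M'.det = Q.det := by
      rw [RingHom.map_det, RingHom.mapMatrix_apply]
      congr 1
      apply Matrix.ext
      intro i j
      rw [Matrix.map_apply]
      exact hQ' i j
    have hcoeff : ((M'.det).coeff r₀ : ℚ) = q₀ := by
      have := congrArg (fun x => x.coeff r₀) hdetlift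
      exact this
    have hred : Matrix.det (fun i j => redQ p (Q i j)) = hmap (phi p hp) M'.det := by
      rw [RingHom.map_det, RingHom.mapMatrix_apply]
      congr 1
      apply Matrix.ext
      intro i j
      rw [Matrix.map_apply]
      show redQ p (Q i j) = hmap (phi p hp) (Q' i j)
      rw [← hQ' i j]
      ext r
      rfl
    rw [hred]
    intro h0
    have hcoeff0 := congrArg (fun x => x.coeff r₀) h0
    simp only [HahnSeries.coeff_zero] at hcoeff0
    have : phi p hp ((M'.det).coeff r₀) = 0 := hcoeff0
    rw [show phi p hp ((M'.det).coeff r₀) = ratRed p q₀ by rw [← hcoeff]; rfl] at this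
    -- but ratRed p q₀ ≠ 0
    have hq₀ne : q₀ ≠ 0 := hr₀
    have hnum : (q₀.num : ZMod p) ≠ 0 := by
      rw [Ne, ZMod.intCast_zmod_eq_zero_iff_dvd]
      intro hdvd
      have h1 : p ∣ q₀.num.natAbs := by
        simpa using Int.natAbs_dvd_natAbs.mpr hdvd
      have h2 := Nat.le_of_dvd (Int.natAbs_pos.2 (Rat.num_ne_zero.2 hq₀ne)) h1
      omega
    have hden : (q₀.den : ZMod p) ≠ 0 := by
      rw [Ne, ZMod.natCast_eq_zero_iff]
      have := ((M'.det).coeff r₀).2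
      rwa [show ((M'.det).coeff r₀ : ℚ) = q₀ from hcoeff] at this
    exact (mul_ne_zero hnum (inv_ne_zero hden)) this
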